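/- arXiv:1711.00439 — 2 statements merged into one kernel-verified Lean document; each statement's English description precedes it below -/
import Mathlib

section
/- Let A ∈ ℝ^{m×n} and C ∈ ℝ^{m×c} satisfy |xᵀAAᵀx − xᵀCCᵀx| ≤ 3ε‖A‖_F² for all unit vectors x ∈ ℝ^m, with 0 < ε < 1. Let H_k ∈ ℝ^{m×k} consist of the top k left singular vectors of C as orthonormal columns, k ≤ c. Then ‖A − H_kH_kᵀA‖_F² ≤ ‖A − A_k‖_F² + 6kε‖A‖_F², where A_k is the best rank-k approximation of A in Frobenius norm. -/
open Matrix

noncomputable def frobSq {m n : ℕ} (A : Matrix (Fin m) (Fin n) ℝ) : ℝ :=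
  ∑ i, ∑ j, (A i j)^2

noncomputable def eunorm {m : ℕ} (v : Fin m → ℝ) : ℝ := Real.sqrt (v ⬝ᵥ v)

lemma hermAAT {m n : ℕ} (A : Matrix (Fin m) (Fin n) ℝ) : (A * Aᵀ).IsHermitian := by
  have h : Aᵀ = Aᴴ := by
    ext i j
    simp [Matrix.conjTranspose_apply]
  rw [h]
  exact Matrix.isHermitian_mul_conjTranspose_self A

/-- `svalSq A k` : square of the `(k+1)`-st largest singular value of `A`
(eigenvalues of `A * Aᵀ` sorted in decreasing order), `0` beyond index `m`. -/
noncomputable def svalSq {m n : ℕ} (A : Matrix (Fin m) (Fin n) ℝ) (k : ℕ) : ℝ :=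
  if k < m then
    (Multiset.sort (Finset.univ.val.map (hermAAT A).eigenvalues) (· ≤ ·)).getD (m - 1 - k) 0
  else 0

/-- Spectral (operator) norm of a square real matrix. -/
noncomputable def specNorm {m : ℕ} (M : Matrix (Fin m) (Fin m) ℝ) : ℝ :=
  ‖Matrix.toEuclideanCLM (𝕜 := ℝ) M‖

/-! ### Auxiliary lemmas -/

lemma quadForm_BBt {m p : ℕ} (B : Matrix (Fin m) (Fin p) ℝ) (x : Fin m → ℝ) :
    x ⬝ᵥ ((B * Bᵀ) *ᵥ x) = ∑ j : Fin p, (∑ u, x u * B u j)^2 := by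
  have inner : ∀ u, ((B * Bᵀ) *ᵥ x) u = ∑ j, B u j * (∑ v, x v * B v j) := by
    intro u
    simp only [mulVec, dotProduct, Matrix.mul_apply, transpose_apply, Finset.sum_mul]
    rw [Finset.sum_comm]
    refine Finset.sum_congr rfl fun j _ => ?_
    rw [Finset.mul_sum]
    exact Finset.sum_congr rfl fun v _ => by ring
  calc x ⬝ᵥ ((B * Bᵀ) *ᵥ x) = ∑ u, ∑ j, (x u * B u j) * (∑ v, x v * B v j) := by
        simp only [dotProduct, inner, Finset.mul_sum]
        exact Finset.sum_congr rfl fun u _ => Finset.sum_congr rfl fun j _ =>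
          Finset.sum_congr rfl fun v _ => by ring
    _ = ∑ j, ∑ u, (x u * B u j) * (∑ v, x v * B v j) := Finset.sum_comm
    _ = ∑ j : Fin p, (∑ u, x u * B u j)^2 := by
        refine Finset.sum_congr rfl fun j _ => ?_
        rw [sq, ← Finset.sum_mul]

lemma parseval_dot {m : ℕ} (b : OrthonormalBasis (Fin m) ℝ (EuclideanSpace ℝ (Fin m)))
    (x y : Fin m → ℝ) :
    ∑ j, ((⇑(b j)) ⬝ᵥ x) * ((⇑(b j)) ⬝ᵥ y) = x ⬝ᵥ y := by
  have h := b.sum_inner_mul_inner ((WithLp.equiv 2 _).symm x) ((WithLp.equiv 2 _).symm y)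
  simp only [PiLp.inner_apply, RCLike.inner_apply, conj_trivial] at h
  simpa [dotProduct, mul_comm, WithLp.equiv_symm_apply, PiLp.toLp_apply] using h

lemma onb_dot {m : ℕ} (b : OrthonormalBasis (Fin m) ℝ (EuclideanSpace ℝ (Fin m)))
    (i j : Fin m) : (⇑(b i)) ⬝ᵥ (⇑(b j)) = if i = j then 1 else 0 := by
  have h := orthonormal_iff_ite.mp b.orthonormal i j
  simp only [PiLp.inner_apply, RCLike.inner_apply, conj_trivial] at h
  simpa [dotProduct, mul_comm] using h

lemma eig_nonneg {m p : ℕ} (B : Matrix (Fin m) (Fin p) ℝ) (j : Fin m) :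
    0 ≤ (hermAAT B).eigenvalues j := by
  set v : Fin m → ℝ := ⇑((hermAAT B).eigenvectorBasis j) with hv
  have hunit : v ⬝ᵥ v = 1 := by
    have := onb_dot ((hermAAT B).eigenvectorBasis) j j
    simpa using this
  have h1 : v ⬝ᵥ ((B * Bᵀ) *ᵥ v) = (hermAAT B).eigenvalues j := by
    rw [(hermAAT B).mulVec_eigenvectorBasis j]
    rw [dotProduct_smul, smul_eq_mul, hunit, mul_one]
  rw [← h1, quadForm_BBt]
  positivity

lemma svalSq_eq_sorted {m p : ℕ} (B : Matrix (Fin m) (Fin p) ℝ) (i : ℕ) (h : i < m) :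
    svalSq B i = ((hermAAT B).eigenvalues ∘ ⇑(Tuple.sort (hermAAT B).eigenvalues))
      ⟨m - 1 - i, by omega⟩ := by
  set f := (hermAAT B).eigenvalues with hf
  set σ := Tuple.sort f with hσ
  have hsorted : (List.ofFn (f ∘ ⇑σ)).Pairwise (· ≤ ·) :=
    (Tuple.monotone_sort f).sortedLE_ofFn.pairwise
  have hval : ((List.ofFn (f ∘ ⇑σ)) : Multiset ℝ) = Finset.univ.val.map f := by
    have h1 : Multiset.map ⇑σ (Finset.univ.val) = Finset.univ.val := by
      calc Multiset.map ⇑σ Finset.univ.val = (Finset.univ.map σ.toEmbedding).val := by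
            rw [Finset.map_val]; rfl
        _ = Finset.univ.val := by rw [Finset.map_univ_equiv]
    have huniv : (Finset.univ : Finset (Fin m)).val = ↑(List.finRange m) := rfl
    rw [List.ofFn_eq_map, ← Multiset.map_coe, ← huniv, ← Multiset.map_map, h1]
  have heq : Multiset.sort (Finset.univ.val.map f) (· ≤ ·) = List.ofFn (f ∘ ⇑σ) := by
    have hperm : (Multiset.sort (Finset.univ.val.map f) (· ≤ ·)).Perm (List.ofFn (f ∘ ⇑σ)) := by
      rw [← Multiset.coe_eq_coe, Multiset.sort_eq, hval]
    exact hperm.eq_of_pairwise' (Multiset.pairwise_sort ..) hsorted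
  rw [svalSq, if_pos h, heq]
  have hlen : m - 1 - i < (List.ofFn (f ∘ ⇑σ)).length := by simp; omega
  rw [List.getD_eq_getElem _ _ hlen, List.getElem_ofFn]

lemma svalSq_nonneg {m p : ℕ} (B : Matrix (Fin m) (Fin p) ℝ) (i : ℕ) :
    0 ≤ svalSq B i := by
  by_cases h : i < m
  · rw [svalSq_eq_sorted B i h]
    exact eig_nonneg B _
  · rw [svalSq, if_neg h]

lemma svalSq_antitone {m p : ℕ} (B : Matrix (Fin m) (Fin p) ℝ) {i j : ℕ} (hij : i ≤ j) :
    svalSq B j ≤ svalSq B i := by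
  by_cases hj : j < m
  · have hi : i < m := lt_of_le_of_lt hij hj
    rw [svalSq_eq_sorted B i hi, svalSq_eq_sorted B j hj]
    exact Tuple.monotone_sort (hermAAT B).eigenvalues
      (by rw [Fin.mk_le_mk]; omega)
  · rw [svalSq, if_neg hj]
    exact svalSq_nonneg B i

lemma svalSq_perm {m p : ℕ} (B : Matrix (Fin m) (Fin p) ℝ) :
    ∃ e : Equiv.Perm (Fin m),
      ∀ i : Fin m, svalSq B (i : ℕ) = (hermAAT B).eigenvalues (e i) := by
  refine ⟨Fin.revPerm.trans (Tuple.sort (hermAAT B).eigenvalues), fun i => ?_⟩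
  rw [svalSq_eq_sorted B i i.isLt]
  have hrev : (⟨m - 1 - (i : ℕ), by omega⟩ : Fin m) = Fin.rev i := by
    apply Fin.ext
    simp only [Fin.val_rev, Fin.val_mk]
    omega
  simp only [Function.comp_apply, Equiv.trans_apply, Fin.revPerm_apply, hrev]

lemma sum_sorted_bound (mm kk : ℕ) (hkm : kk ≤ mm) (D Cc : ℕ → ℝ)
    (hD : ∀ i j : ℕ, i ≤ j → D j ≤ D i) (hC0 : ∀ i, 0 ≤ Cc i) (hC1 : ∀ i, Cc i ≤ 1)
    (hCs : ∑ i ∈ Finset.range mm, Cc i = kk) :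
    ∑ i ∈ Finset.range mm, D i * Cc i ≤ ∑ i ∈ Finset.range kk, D i := by
  have hsplit : ∀ g : ℕ → ℝ, ∑ i ∈ Finset.range mm, g i =
      ∑ i ∈ Finset.range kk, g i + ∑ i ∈ Finset.Ico kk mm, g i := by
    intro g
    rw [Finset.range_eq_Ico, Finset.range_eq_Ico]
    exact (Finset.sum_Ico_consecutive g (Nat.zero_le kk) hkm).symm
  rw [hsplit (fun i => D i * Cc i)]
  have h1 : ∑ i ∈ Finset.range kk, D i * Cc i ≤
      ∑ i ∈ Finset.range kk, (D i + D kk * (Cc i - 1)) := by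
    refine Finset.sum_le_sum fun i hi => ?_
    have hik : i ≤ kk := le_of_lt (Finset.mem_range.mp hi)
    have := mul_le_mul_of_nonpos_right (hD i kk hik) (by linarith [hC1 i] : Cc i - 1 ≤ 0)
    nlinarith [hD i kk hik, hC1 i, hC0 i]
  have h2 : ∑ i ∈ Finset.Ico kk mm, D i * Cc i ≤
      ∑ i ∈ Finset.Ico kk mm, D kk * Cc i := by
    refine Finset.sum_le_sum fun i hi => ?_
    exact mul_le_mul_of_nonneg_right (hD kk i (Finset.mem_Ico.mp hi).1) (hC0 i)
  have e1 : ∑ i ∈ Finset.range kk, (D i + D kk * (Cc i - 1)) =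
      ∑ i ∈ Finset.range kk, D i + D kk * (∑ i ∈ Finset.range kk, Cc i - kk) := by
    rw [Finset.sum_add_distrib, ← Finset.mul_sum, Finset.sum_sub_distrib]
    simp [Finset.card_range]
  have e2 : ∑ i ∈ Finset.Ico kk mm, D kk * Cc i = D kk * ∑ i ∈ Finset.Ico kk mm, Cc i := by
    rw [Finset.mul_sum]
  have e3 : ∑ i ∈ Finset.range kk, Cc i + ∑ i ∈ Finset.Ico kk mm, Cc i = kk := by
    rw [← hsplit Cc]; exact hCs
  have e4 : (∑ i ∈ Finset.range kk, Cc i - (kk : ℝ)) + ∑ i ∈ Finset.Ico kk mm, Cc i = 0 := by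
    linarith
  have e5 : D kk * (∑ i ∈ Finset.range kk, Cc i - (kk : ℝ)) +
      D kk * ∑ i ∈ Finset.Ico kk mm, Cc i = 0 := by
    rw [← mul_add, e4, mul_zero]
  linarith

lemma kyFan {m k p : ℕ} (hkm : k ≤ m) (B : Matrix (Fin m) (Fin p) ℝ)
    (Q : Matrix (Fin m) (Fin k) ℝ) (hQ : Qᵀ * Q = 1) :
    ∑ i : Fin k, (fun x => Q x i) ⬝ᵥ ((B * Bᵀ) *ᵥ (fun x => Q x i)) ≤
      ∑ i : Fin k, svalSq B (i : ℕ) := by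
  classical
  set hM := hermAAT B with hhM
  set b := hM.eigenvectorBasis with hb
  set f := hM.eigenvalues with hfdef
  have hMsymm : (B * Bᵀ)ᵀ = B * Bᵀ := by rw [transpose_mul, transpose_transpose]
  have keyQF : ∀ x : Fin m → ℝ,
      x ⬝ᵥ ((B * Bᵀ) *ᵥ x) = ∑ j, f j * ((⇑(b j)) ⬝ᵥ x)^2 := by
    intro x
    rw [← parseval_dot b x ((B * Bᵀ) *ᵥ x)]
    refine Finset.sum_congr rfl fun j _ => ?_
    have h1 : (⇑(b j)) ⬝ᵥ ((B * Bᵀ) *ᵥ x) = f j * ((⇑(b j)) ⬝ᵥ x) := by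
      rw [dotProduct_mulVec, ← mulVec_transpose, hMsymm, hM.mulVec_eigenvectorBasis j,
        smul_dotProduct, smul_eq_mul]
    rw [h1]
    ring
  set qv : Fin k → Fin m → ℝ := fun i x => Q x i with hqv
  have hgoal : (∑ i : Fin k, (fun x => Q x i) ⬝ᵥ ((B * Bᵀ) *ᵥ (fun x => Q x i)))
      = ∑ i : Fin k, qv i ⬝ᵥ ((B * Bᵀ) *ᵥ qv i) := rfl
  rw [hgoal]
  set cc : Fin m → ℝ := fun j => ∑ i : Fin k, ((⇑(b j)) ⬝ᵥ qv i)^2 with hcc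
  have lhs_eq : ∑ i : Fin k, qv i ⬝ᵥ ((B * Bᵀ) *ᵥ qv i) = ∑ j, f j * cc j := by
    simp only [keyQF, hcc]
    rw [Finset.sum_comm]
    exact Finset.sum_congr rfl fun j _ => by rw [Finset.mul_sum]
  have hQcol : ∀ i i' : Fin k, qv i ⬝ᵥ qv i' = if i = i' then 1 else 0 := by
    intro i i'
    have h := congrFun (congrFun hQ i) i'
    simp only [Matrix.mul_apply, transpose_apply, Matrix.one_apply] at h
    simpa [dotProduct, hqv] using h
  have csum : ∑ j, cc j = (k : ℝ) := by
    have h1 : ∑ j, cc j = ∑ i : Fin k, ∑ j, ((⇑(b j)) ⬝ᵥ qv i) * ((⇑(b j)) ⬝ᵥ qv i) := by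
      simp only [hcc, sq]
      exact Finset.sum_comm
    rw [h1]
    have h2 : ∀ i : Fin k, ∑ j, ((⇑(b j)) ⬝ᵥ qv i) * ((⇑(b j)) ⬝ᵥ qv i) = 1 := by
      intro i
      rw [parseval_dot b (qv i) (qv i), hQcol i i, if_pos rfl]
    simp [h2]
  have c0 : ∀ j, 0 ≤ cc j := fun j => Finset.sum_nonneg fun i _ => sq_nonneg _
  have c1 : ∀ j, cc j ≤ 1 := by
    intro j
    set v : Fin m → ℝ := ⇑(b j) with hv
    set w : Fin k → ℝ := Qᵀ *ᵥ v with hw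
    have hwi : ∀ i, v ⬝ᵥ qv i = w i := by
      intro i
      simp only [hw, mulVec, dotProduct, transpose_apply, hqv]
      exact Finset.sum_congr rfl fun x _ => mul_comm _ _
    have hwi' : ∀ i, (⇑(b j) : Fin m → ℝ) ⬝ᵥ qv i = w i := hwi
    have hcw : cc j = w ⬝ᵥ w := by
      calc cc j = ∑ i : Fin k, ((⇑(b j) : Fin m → ℝ) ⬝ᵥ qv i)^2 := rfl
        _ = ∑ i : Fin k, (w i)^2 := Finset.sum_congr rfl fun i _ => by rw [hwi' i]
        _ = w ⬝ᵥ w := by simp [dotProduct, sq]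
    have hvv : v ⬝ᵥ v = 1 := by
      have h := onb_dot b j j
      simpa using h
    have hvQw : v ⬝ᵥ (Q *ᵥ w) = w ⬝ᵥ w := by
      rw [dotProduct_mulVec, ← mulVec_transpose]
    have hQwQw : (Q *ᵥ w) ⬝ᵥ (Q *ᵥ w) = w ⬝ᵥ w := by
      rw [dotProduct_mulVec, ← mulVec_transpose, mulVec_mulVec, hQ, one_mulVec]
    have hpos : 0 ≤ (v - Q *ᵥ w) ⬝ᵥ (v - Q *ᵥ w) :=
      Finset.sum_nonneg fun x _ => mul_self_nonneg _
    have hexp : (v - Q *ᵥ w) ⬝ᵥ (v - Q *ᵥ w) = 1 - w ⬝ᵥ w := by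
      rw [sub_dotProduct, dotProduct_sub, dotProduct_sub, hvv, hvQw, hQwQw,
        dotProduct_comm (Q *ᵥ w) v, hvQw]
      ring
    rw [hcw]
    linarith [hexp ▸ hpos]
  obtain ⟨e, he⟩ := svalSq_perm B
  have reindex : ∑ j, f j * cc j = ∑ i : Fin m, svalSq B (i : ℕ) * cc (e i) := by
    rw [← Equiv.sum_comp e (fun j => f j * cc j)]
    exact Finset.sum_congr rfl fun i _ => by rw [he i]
  set Cc : ℕ → ℝ := fun i => if h : i < m then cc (e ⟨i, h⟩) else 0 with hCc
  have hCcFin : ∀ i : Fin m, Cc (i : ℕ) = cc (e i) := by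
    intro i
    simp only [hCc, dif_pos i.isLt, Fin.eta]
  have hfin : ∑ i : Fin m, svalSq B (i : ℕ) * cc (e i) =
      ∑ i ∈ Finset.range m, svalSq B i * Cc i := by
    rw [← Fin.sum_univ_eq_sum_range (fun i => svalSq B i * Cc i) m]
    exact Finset.sum_congr rfl fun i _ => by rw [hCcFin i]
  have hCs : ∑ i ∈ Finset.range m, Cc i = (k : ℝ) := by
    rw [← Fin.sum_univ_eq_sum_range (fun i => Cc i) m]
    calc ∑ i : Fin m, Cc (i : ℕ) = ∑ i : Fin m, cc (e i) :=
          Finset.sum_congr rfl fun i _ => hCcFin i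
      _ = ∑ j, cc j := Equiv.sum_comp e cc
      _ = (k : ℝ) := csum
  have hC0' : ∀ i, 0 ≤ Cc i := by
    intro i
    simp only [hCc]
    split
    · exact c0 _
    · exact le_refl _
  have hC1' : ∀ i, Cc i ≤ 1 := by
    intro i
    simp only [hCc]
    split
    · exact c1 _
    · exact zero_le_one
  have hbound := sum_sorted_bound m k hkm (svalSq B) Cc
    (fun i j hij => svalSq_antitone B hij) hC0' hC1' hCs
  rw [lhs_eq, reindex, hfin]
  calc ∑ i ∈ Finset.range m, svalSq B i * Cc i ≤ ∑ i ∈ Finset.range k, svalSq B i := hbound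
    _ = ∑ i : Fin k, svalSq B (i : ℕ) := (Fin.sum_univ_eq_sum_range (fun i => svalSq B i) k).symm

lemma frobSq_nonneg {m n : ℕ} (A : Matrix (Fin m) (Fin n) ℝ) : 0 ≤ frobSq A := by
  unfold frobSq
  positivity

lemma frobSq_eq_trace {m n : ℕ} (M : Matrix (Fin m) (Fin n) ℝ) :
    frobSq M = (Mᵀ * M).trace := by
  simp only [frobSq, Matrix.trace, Matrix.diag, Matrix.mul_apply, transpose_apply, sq]
  exact Finset.sum_comm

lemma frobSq_proj_sub {m n k : ℕ} (A : Matrix (Fin m) (Fin n) ℝ)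
    (H : Matrix (Fin m) (Fin k) ℝ) (hH : Hᵀ * H = 1) :
    frobSq (A - H * Hᵀ * A) = frobSq A - frobSq (Hᵀ * A) := by
  rw [frobSq_eq_trace, frobSq_eq_trace, frobSq_eq_trace]
  have e : (A - H * Hᵀ * A)ᵀ * (A - H * Hᵀ * A)
      = Aᵀ * A - Aᵀ * (H * Hᵀ * A) - ((H * Hᵀ * A)ᵀ * A - (H * Hᵀ * A)ᵀ * (H * Hᵀ * A)) := by
    rw [transpose_sub, Matrix.sub_mul, Matrix.mul_sub, Matrix.mul_sub]
  have c1 : Aᵀ * (H * Hᵀ * A) = (Hᵀ * A)ᵀ * (Hᵀ * A) := by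
    simp only [transpose_mul, transpose_transpose, Matrix.mul_assoc]
  have c2 : (H * Hᵀ * A)ᵀ * A = (Hᵀ * A)ᵀ * (Hᵀ * A) := by
    simp only [transpose_mul, transpose_transpose, Matrix.mul_assoc]
  have c3 : (H * Hᵀ * A)ᵀ * (H * Hᵀ * A) = (Hᵀ * A)ᵀ * (Hᵀ * A) := by
    simp only [transpose_mul, transpose_transpose, Matrix.mul_assoc]
    rw [← Matrix.mul_assoc Hᵀ H (Hᵀ * A), hH, Matrix.one_mul]
  rw [e, c1, c2, c3]
  simp only [trace_sub]
  ring

lemma frobSq_tmul {m n k : ℕ} (A : Matrix (Fin m) (Fin n) ℝ) (H : Matrix (Fin m) (Fin k) ℝ) :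
    frobSq (Hᵀ * A) = ∑ i : Fin k, (fun x => H x i) ⬝ᵥ ((A * Aᵀ) *ᵥ (fun x => H x i)) := by
  have h : ∀ i : Fin k, (fun x => H x i) ⬝ᵥ ((A * Aᵀ) *ᵥ (fun x => H x i))
      = ∑ j, (∑ u, H u i * A u j)^2 := fun i => quadForm_BBt A _
  simp only [h, frobSq, Matrix.mul_apply, transpose_apply]

theorem stmt7 {m n c k : ℕ} (A : Matrix (Fin m) (Fin n) ℝ) (C : Matrix (Fin m) (Fin c) ℝ)
    (ε : ℝ) (hε0 : 0 < ε) (hε1 : ε < 1)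
    (hRQ : ∀ x : Fin m → ℝ, x ⬝ᵥ x = 1 →
      |x ⬝ᵥ ((A * Aᵀ) *ᵥ x) - x ⬝ᵥ ((C * Cᵀ) *ᵥ x)| ≤ 3 * ε * frobSq A)
    (hk : k ≤ c)
    (H : Matrix (Fin m) (Fin k) ℝ) (hH : Hᵀ * H = 1)
    (hsing : ∀ i : Fin k,
      (C * Cᵀ) *ᵥ (fun x => H x i) = svalSq C (i : ℕ) • (fun x => H x i)) :
    frobSq (A - H * Hᵀ * A) ≤
      (frobSq A - ∑ i : Fin k, svalSq A (i : ℕ)) + 6 * k * ε * frobSq A := by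
  classical
  have hF0 : 0 ≤ frobSq A := frobSq_nonneg A
  have hkm : k ≤ m := by
    have h1 : (Hᵀ * H).rank = k := by rw [hH]; simp [Matrix.rank_one]
    have h2 := Matrix.rank_mul_le_right Hᵀ H
    have h3 := Matrix.rank_le_height H
    omega
  set hv : Fin k → Fin m → ℝ := fun i x => H x i with hhv
  have hunit : ∀ i : Fin k, hv i ⬝ᵥ hv i = 1 := by
    intro i
    have h := congrFun (congrFun hH i) i
    simp only [Matrix.mul_apply, transpose_apply, Matrix.one_apply_eq] at h
    simpa [dotProduct, hhv] using h
  have hCq : ∀ i : Fin k, hv i ⬝ᵥ ((C * Cᵀ) *ᵥ hv i) = svalSq C (i : ℕ) := by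
    intro i
    have hs : (C * Cᵀ) *ᵥ hv i = svalSq C (i : ℕ) • hv i := hsing i
    rw [hs, dotProduct_smul, smul_eq_mul, hunit i, mul_one]
  have hstep3 : ∑ i : Fin k, svalSq C (i : ℕ) - k * (3 * ε * frobSq A) ≤ frobSq (Hᵀ * A) := by
    rw [frobSq_tmul A H]
    have hlow : ∀ i : Fin k, svalSq C (i : ℕ) - 3 * ε * frobSq A ≤
        hv i ⬝ᵥ ((A * Aᵀ) *ᵥ hv i) := by
      intro i
      have habs := hRQ (hv i) (hunit i)
      rw [hCq i] at habs
      linarith [(abs_le.mp habs).1]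
    calc ∑ i : Fin k, svalSq C (i : ℕ) - k * (3 * ε * frobSq A)
        = ∑ i : Fin k, (svalSq C (i : ℕ) - 3 * ε * frobSq A) := by
          rw [Finset.sum_sub_distrib, Finset.sum_const, Finset.card_univ, Fintype.card_fin,
            nsmul_eq_mul]
      _ ≤ ∑ i : Fin k, hv i ⬝ᵥ ((A * Aᵀ) *ᵥ hv i) := Finset.sum_le_sum fun i _ => hlow i
  obtain ⟨eA, heA⟩ := svalSq_perm A
  set bA := (hermAAT A).eigenvectorBasis with hbA
  set Q : Matrix (Fin m) (Fin k) ℝ :=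
    Matrix.of (fun x i => (⇑(bA (eA (Fin.castLE hkm i))) : Fin m → ℝ) x) with hQdef
  set qv : Fin k → Fin m → ℝ := fun i x => Q x i with hqv
  have hqv' : ∀ i, qv i = (⇑(bA (eA (Fin.castLE hkm i))) : Fin m → ℝ) := fun i => rfl
  have hdot : ∀ i i' : Fin k, qv i ⬝ᵥ qv i' = if i = i' then 1 else 0 := by
    intro i i'
    rw [hqv' i, hqv' i', onb_dot]
    simp [eA.injective.eq_iff, (Fin.castLE_injective hkm).eq_iff]
  have hQorth : Qᵀ * Q = 1 := by
    ext i i'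
    have h := hdot i i'
    simpa [Matrix.mul_apply, transpose_apply, dotProduct, Matrix.one_apply, hqv] using h
  have hqunit : ∀ i, qv i ⬝ᵥ qv i = 1 := by
    intro i
    rw [hdot i i, if_pos rfl]
  have hAq : ∀ i : Fin k, (A * Aᵀ) *ᵥ qv i = svalSq A (i : ℕ) • qv i := by
    intro i
    rw [hqv' i, (hermAAT A).mulVec_eigenvectorBasis]
    have h := heA (Fin.castLE hkm i)
    rw [Fin.coe_castLE] at h
    rw [← h]
  have hSA : ∑ i : Fin k, svalSq A (i : ℕ) = ∑ i : Fin k, qv i ⬝ᵥ ((A * Aᵀ) *ᵥ qv i) := by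
    refine Finset.sum_congr rfl fun i _ => ?_
    rw [hAq i, dotProduct_smul, smul_eq_mul, hqunit i, mul_one]
  have hstep4 : ∑ i : Fin k, svalSq A (i : ℕ) ≤
      ∑ i : Fin k, svalSq C (i : ℕ) + k * (3 * ε * frobSq A) := by
    rw [hSA]
    have hper : ∀ i : Fin k, qv i ⬝ᵥ ((A * Aᵀ) *ᵥ qv i) ≤
        qv i ⬝ᵥ ((C * Cᵀ) *ᵥ qv i) + 3 * ε * frobSq A := by
      intro i
      have habs := hRQ (qv i) (hqunit i)
      linarith [(abs_le.mp habs).2]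
    have hKF := kyFan hkm C Q hQorth
    calc ∑ i : Fin k, qv i ⬝ᵥ ((A * Aᵀ) *ᵥ qv i)
        ≤ ∑ i : Fin k, (qv i ⬝ᵥ ((C * Cᵀ) *ᵥ qv i) + 3 * ε * frobSq A) :=
          Finset.sum_le_sum fun i _ => hper i
      _ = ∑ i : Fin k, qv i ⬝ᵥ ((C * Cᵀ) *ᵥ qv i) + k * (3 * ε * frobSq A) := by
          rw [Finset.sum_add_distrib, Finset.sum_const, Finset.card_univ, Fintype.card_fin,
            nsmul_eq_mul]
      _ ≤ ∑ i : Fin k, svalSq C (i : ℕ) + k * (3 * ε * frobSq A) := by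
          exact add_le_add_left hKF _
  rw [frobSq_proj_sub A H hH]
  have hcast : (6 : ℝ) * k * ε * frobSq A = 2 * (k * (3 * ε * frobSq A)) := by ring
  linarith [hstep3, hstep4]
end

section
/- Let A ∈ ℝ^{m×n} and C ∈ ℝ^{m×c} satisfy ‖AAᵀ − CCᵀ‖₂ ≤ 3ε‖A‖_F². Then the sums of the top k squared singular values satisfy |Σ_{i=1}^k σ_i(C)² − Σ_{i=1}^k σ_i(A)²| ≤ 3εk‖A‖_F² for every k ≤ min(m, c, n). -/
open Matrix

section KyFanAux
open Finset

noncomputable def sval {m : ℕ} {P : Matrix (Fin m) (Fin m) ℝ} (hP : P.IsHermitian) (k : ℕ) : ℝ :=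
  if h : k < m then hP.eigenvalues (Tuple.sort hP.eigenvalues (Fin.rev ⟨k, h⟩)) else 0

lemma sval_eq {m : ℕ} {P : Matrix (Fin m) (Fin m) ℝ} (hP : P.IsHermitian) (i : Fin m) :
    sval hP i.val = hP.eigenvalues (Tuple.sort hP.eigenvalues (Fin.rev i)) := by
  rw [sval, dif_pos i.isLt]

lemma sval_anti {m : ℕ} {P : Matrix (Fin m) (Fin m) ℝ} (hP : P.IsHermitian)
    {i j : ℕ} (hij : i ≤ j) (hj : j < m) : sval hP j ≤ sval hP i := by
  have hi : i < m := lt_of_le_of_lt hij hj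
  rw [sval, dif_pos hj, sval, dif_pos hi]
  exact Tuple.monotone_sort hP.eigenvalues (Fin.rev_le_rev.mpr hij)

lemma sorted_eigen {m : ℕ} {P : Matrix (Fin m) (Fin m) ℝ} (hP : P.IsHermitian) :
    Multiset.sort (Finset.univ.val.map hP.eigenvalues) (· ≤ ·) =
      List.ofFn (hP.eigenvalues ∘ Tuple.sort hP.eigenvalues) := by
  apply List.Perm.eq_of_pairwise' (r := (· ≤ ·)) ?_ ?_ ?_
  rotate_left 2
  · rw [← Multiset.coe_eq_coe, Multiset.sort_eq, ← Fin.univ_val_map]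
    conv_lhs => rw [← Finset.map_univ_equiv (Tuple.sort hP.eigenvalues)]
    rw [Finset.map_val, Multiset.map_map]
    rfl
  · exact Multiset.pairwise_sort _ _
  · exact (List.sortedLE_ofFn_iff.mpr (Tuple.monotone_sort hP.eigenvalues)).pairwise

lemma svalSq_eq_sval {m n : ℕ} (A : Matrix (Fin m) (Fin n) ℝ) (k : ℕ) :
    svalSq A k = sval (hermAAT A) k := by
  rw [svalSq, sval]
  by_cases h : k < m
  · rw [if_pos h, dif_pos h, sorted_eigen]
    have hlen : m - 1 - k < (List.ofFn ((hermAAT A).eigenvalues ∘ Tuple.sort (hermAAT A).eigenvalues)).length := by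
      simp; omega
    rw [List.getD_eq_getElem _ _ hlen, List.getElem_ofFn]
    simp only [Function.comp_apply]
    congr 2
    ext
    simp [Fin.val_rev]
    omega
  · rw [if_neg h, dif_neg h]

lemma comb {m k : ℕ} (hk : k ≤ m) (d : ℕ → ℝ) (hd : ∀ i j : ℕ, i ≤ j → j < m → d j ≤ d i)
    (s : Fin m → ℝ) (hs0 : ∀ j, 0 ≤ s j) (hs1 : ∀ j, s j ≤ 1)
    (hsum : ∑ j, s j = (k : ℝ)) :
    ∑ j : Fin m, d j.val * s j ≤ ∑ i ∈ Finset.range k, d i := by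
  rcases Nat.eq_zero_or_pos k with rfl | hk0
  · have hz : ∀ j ∈ Finset.univ, s j = 0 := by
      intro j _
      have := (Finset.sum_eq_zero_iff_of_nonneg (fun j _ => hs0 j)).1 (by simpa using hsum)
      exact this j (Finset.mem_univ j)
    rw [Finset.sum_congr rfl (fun j hj => by rw [hz j hj, mul_zero])]
    simp
  · set t : ℝ := d (k - 1) with ht
    have hkm : k - 1 < m := lt_of_lt_of_le (Nat.sub_lt hk0 one_pos) hk
    have step1 : ∑ j : Fin m, d j.val * s j = ∑ j : Fin m, (d j.val - t) * s j + t * k := by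
      rw [← hsum, Finset.mul_sum, ← Finset.sum_add_distrib]
      congr 1; ext j; ring
    rw [step1]
    have step2 : ∑ j : Fin m, (d j.val - t) * s j ≤ ∑ j : Fin m, max (d j.val - t) 0 := by
      apply Finset.sum_le_sum
      intro j _
      rcases le_or_gt t (d j.val) with hle | hlt
      · calc (d j.val - t) * s j ≤ (d j.val - t) * 1 :=
              mul_le_mul_of_nonneg_left (hs1 j) (by linarith)
          _ ≤ max (d j.val - t) 0 := by rw [mul_one]; exact le_max_left _ _
      · have : (d j.val - t) * s j ≤ 0 := mul_nonpos_of_nonpos_of_nonneg (by linarith) (hs0 j)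
        exact this.trans (le_max_right _ _)
    have step3 : ∑ j : Fin m, max (d j.val - t) 0 = ∑ i ∈ Finset.range k, (d i - t) := by
      rw [Fin.sum_univ_eq_sum_range (fun i => max (d i - t) 0)]
      rw [Finset.range_eq_Ico, ← Finset.sum_Ico_consecutive _ (Nat.zero_le k) hk]
      have h1 : ∑ i ∈ Finset.Ico 0 k, max (d i - t) 0 = ∑ i ∈ Finset.Ico 0 k, (d i - t) := by
        apply Finset.sum_congr rfl
        intro i hi
        rw [Finset.mem_Ico] at hi
        have : t ≤ d i := hd i (k - 1) (by omega) hkm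
        rw [max_eq_left (by linarith)]
      have h2 : ∑ i ∈ Finset.Ico k m, max (d i - t) 0 = 0 := by
        apply Finset.sum_eq_zero
        intro i hi
        rw [Finset.mem_Ico] at hi
        have : d i ≤ t := hd (k - 1) i (by omega) hi.2
        rw [max_eq_right (by linarith)]
      rw [h1, h2, add_zero, Finset.range_eq_Ico]
    calc ∑ j : Fin m, (d j.val - t) * s j + t * k
        ≤ ∑ i ∈ Finset.range k, (d i - t) + t * k := by rw [← step3]; exact add_le_add_left step2 _
      _ = ∑ i ∈ Finset.range k, d i := by
          rw [Finset.sum_sub_distrib, Finset.sum_const, Finset.card_range, nsmul_eq_mul]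
          ring

lemma clm_eigen {m : ℕ} {P : Matrix (Fin m) (Fin m) ℝ} (hP : P.IsHermitian) (j : Fin m) :
    toEuclideanCLM (𝕜 := ℝ) P (hP.eigenvectorBasis j) =
      hP.eigenvalues j • hP.eigenvectorBasis j := by
  have h1 := hP.mulVec_eigenvectorBasis j
  apply (WithLp.equiv 2 (Fin m → ℝ)).injective
  rw [WithLp.equiv_apply, WithLp.equiv_apply, Matrix.ofLp_toEuclideanCLM, WithLp.ofLp_smul]
  exact h1

open RealInnerProductSpace in
lemma kyfanA {m : ℕ} {Q : Matrix (Fin m) (Fin m) ℝ} (hQ : Q.IsHermitian) {k : ℕ} (hk : k ≤ m)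
    (v : Fin k → EuclideanSpace ℝ (Fin m)) (hv : Orthonormal ℝ v) :
    ∑ i : Fin k, ⟪(toEuclideanCLM (𝕜 := ℝ) Q) (v i), v i⟫ ≤ ∑ i ∈ Finset.range k, sval hQ i := by
  set T := toEuclideanCLM (𝕜 := ℝ) Q with hT
  set e := hQ.eigenvectorBasis with he
  set μ := hQ.eigenvalues with hμ
  have hsa : IsSelfAdjoint T := by
    rw [hT]
    show star _ = _
    rw [← map_star]
    exact congrArg _ hQ
  have hTe : ∀ j : Fin m, T (e j) = μ j • e j := fun j => clm_eigen hQ j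
  have key : ∀ x : EuclideanSpace ℝ (Fin m), ⟪T x, x⟫ = ∑ j, μ j * ⟪e j, x⟫ ^ 2 := by
    intro x
    rw [← OrthonormalBasis.sum_inner_mul_inner e (T x) x]
    apply Finset.sum_congr rfl
    intro j _
    rw [show ⟪T x, e j⟫ = ⟪x, T (e j)⟫ from hsa.isSymmetric x _, hTe j, real_inner_smul_right,
      real_inner_comm x (e j)]
    ring
  set s : Fin m → ℝ := fun j => ∑ i : Fin k, ⟪e j, v i⟫ ^ 2 with hs
  have lhs_eq : ∑ i : Fin k, ⟪T (v i), v i⟫ = ∑ j : Fin m, μ j * s j := by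
    simp_rw [key, hs]
    rw [Finset.sum_comm]
    exact Finset.sum_congr rfl fun j _ => by rw [← Finset.mul_sum]
  have hs0 : ∀ j, 0 ≤ s j := fun j => Finset.sum_nonneg fun i _ => sq_nonneg _
  have hs1 : ∀ j, s j ≤ 1 := by
    intro j
    have hb := hv.sum_inner_products_le (𝕜 := ℝ) (e j) (s := Finset.univ)
    have hn : ‖e j‖ = 1 := e.orthonormal.1 j
    rw [hn] at hb
    calc s j = ∑ i : Fin k, ‖⟪v i, e j⟫‖ ^ 2 := by
          apply Finset.sum_congr rfl
          intro i _
          rw [Real.norm_eq_abs, sq_abs, real_inner_comm]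
      _ ≤ 1 ^ 2 := hb
      _ = 1 := one_pow 2
  have hsum : ∑ j, s j = (k : ℝ) := by
    rw [hs, Finset.sum_comm]
    have h1 : ∀ i : Fin k, ∑ j : Fin m, ⟪e j, v i⟫ ^ 2 = 1 := by
      intro i
      have h2 := e.sum_inner_mul_inner (v i) (v i)
      have h3 : ⟪v i, v i⟫ = 1 := by
        rw [real_inner_self_eq_norm_sq, hv.1 i, one_pow]
      rw [h3] at h2
      rw [← h2]
      apply Finset.sum_congr rfl
      intro j _
      rw [sq, real_inner_comm (e j) (v i)]
    rw [Finset.sum_congr rfl fun i _ => h1 i, Finset.sum_const, Finset.card_univ,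
      Fintype.card_fin, nsmul_eq_mul, mul_one]
  rw [lhs_eq]
  set E : Fin m ≃ Fin m := Fin.revPerm.trans (Tuple.sort μ) with hE
  have reidx : ∑ j : Fin m, μ j * s j = ∑ i : Fin m, sval hQ i.val * (s ∘ E) i := by
    rw [← Equiv.sum_comp E (fun j => μ j * s j)]
    apply Finset.sum_congr rfl
    intro i _
    rw [sval_eq hQ i]
    rfl
  rw [reidx]
  exact comb hk (sval hQ) (fun i j hij hj => sval_anti hQ hij hj) (s ∘ E)
    (fun j => hs0 _) (fun j => hs1 _)
    (by simpa [Function.comp] using (Equiv.sum_comp E s).trans hsum)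

open RealInnerProductSpace in
lemma kyfan_diff {m : ℕ} {P Q : Matrix (Fin m) (Fin m) ℝ} (hP : P.IsHermitian)
    (hQ : Q.IsHermitian) {k : ℕ} (hk : k ≤ m) :
    ∑ i ∈ Finset.range k, sval hP i ≤
      ∑ i ∈ Finset.range k, sval hQ i + k * specNorm (P - Q) := by
  set σ := Tuple.sort hP.eigenvalues with hσ
  set u : Fin k → EuclideanSpace ℝ (Fin m) :=
    fun i => hP.eigenvectorBasis (σ (Fin.rev (Fin.castLE hk i))) with hu
  have hinj : Function.Injective (fun i : Fin k => σ (Fin.rev (Fin.castLE hk i))) :=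
    σ.injective.comp (Fin.rev_injective.comp (Fin.castLE_injective hk))
  have hon : Orthonormal ℝ u := hP.eigenvectorBasis.orthonormal.comp _ hinj
  have hnorm : ∀ i, ‖u i‖ = 1 := fun i => hon.1 i
  have sum_eq : ∑ i ∈ Finset.range k, sval hP i =
      ∑ i : Fin k, ⟪toEuclideanCLM (𝕜 := ℝ) P (u i), u i⟫ := by
    rw [← Fin.sum_univ_eq_sum_range (fun i => sval hP i) k]
    apply Finset.sum_congr rfl
    intro i _
    have h1 : sval hP i.val = hP.eigenvalues (σ (Fin.rev (Fin.castLE hk i))) := by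
      have := sval_eq hP (Fin.castLE hk i)
      simpa using this
    rw [h1, hu, clm_eigen hP, real_inner_smul_left, real_inner_self_eq_norm_sq,
      hP.eigenvectorBasis.orthonormal.1 _, one_pow, mul_one]
  have split : ∀ i : Fin k, ⟪toEuclideanCLM (𝕜 := ℝ) P (u i), u i⟫ =
      ⟪toEuclideanCLM (𝕜 := ℝ) Q (u i), u i⟫ +
        ⟪toEuclideanCLM (𝕜 := ℝ) (P - Q) (u i), u i⟫ := by
    intro i
    rw [map_sub, ContinuousLinearMap.sub_apply, inner_sub_left]
    ring
  have bnd : ∀ i : Fin k, ⟪toEuclideanCLM (𝕜 := ℝ) (P - Q) (u i), u i⟫ ≤ specNorm (P - Q) := by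
    intro i
    calc ⟪toEuclideanCLM (𝕜 := ℝ) (P - Q) (u i), u i⟫
        ≤ ‖toEuclideanCLM (𝕜 := ℝ) (P - Q) (u i)‖ * ‖u i‖ := real_inner_le_norm _ _
      _ ≤ ‖toEuclideanCLM (𝕜 := ℝ) (P - Q)‖ * ‖u i‖ * ‖u i‖ :=
          mul_le_mul_of_nonneg_right ((toEuclideanCLM (𝕜 := ℝ) (P - Q)).le_opNorm _)
            (norm_nonneg _)
      _ = specNorm (P - Q) := by rw [hnorm i, mul_one, mul_one, specNorm]
  calc ∑ i ∈ Finset.range k, sval hP i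
      = ∑ i : Fin k, ⟪toEuclideanCLM (𝕜 := ℝ) Q (u i), u i⟫ +
          ∑ i : Fin k, ⟪toEuclideanCLM (𝕜 := ℝ) (P - Q) (u i), u i⟫ := by
        rw [sum_eq, ← Finset.sum_add_distrib]
        exact Finset.sum_congr rfl fun i _ => split i
    _ ≤ ∑ i ∈ Finset.range k, sval hQ i + k * specNorm (P - Q) := by
        apply add_le_add (kyfanA hQ hk u hon)
        calc ∑ i : Fin k, ⟪toEuclideanCLM (𝕜 := ℝ) (P - Q) (u i), u i⟫
            ≤ ∑ _i : Fin k, specNorm (P - Q) := Finset.sum_le_sum fun i _ => bnd i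
          _ = k * specNorm (P - Q) := by
              rw [Finset.sum_const, Finset.card_univ, Fintype.card_fin, nsmul_eq_mul]

end KyFanAux

theorem stmt13 {m n c : ℕ} (A : Matrix (Fin m) (Fin n) ℝ) (C : Matrix (Fin m) (Fin c) ℝ)
    (ε : ℝ) (h : specNorm (A * Aᵀ - C * Cᵀ) ≤ 3 * ε * frobSq A) :
    ∀ k : ℕ, k ≤ min m (min c n) →
      |∑ i ∈ Finset.range k, svalSq C i - ∑ i ∈ Finset.range k, svalSq A i| ≤
        3 * ε * k * frobSq A := by
  intro k hkle
  have hkm : k ≤ m := le_trans hkle (min_le_left _ _)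
  have hCsum : ∑ i ∈ Finset.range k, svalSq C i = ∑ i ∈ Finset.range k, sval (hermAAT C) i :=
    Finset.sum_congr rfl fun i _ => svalSq_eq_sval C i
  have hAsum : ∑ i ∈ Finset.range k, svalSq A i = ∑ i ∈ Finset.range k, sval (hermAAT A) i :=
    Finset.sum_congr rfl fun i _ => svalSq_eq_sval A i
  have hswap : specNorm (C * Cᵀ - A * Aᵀ) = specNorm (A * Aᵀ - C * Cᵀ) := by
    rw [specNorm, specNorm, ← neg_sub (A * Aᵀ) (C * Cᵀ), map_neg, norm_neg]
  have h1 := kyfan_diff (hermAAT C) (hermAAT A) hkm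
  have h2 := kyfan_diff (hermAAT A) (hermAAT C) hkm
  rw [hswap] at h1
  have hmul : (k : ℝ) * specNorm (A * Aᵀ - C * Cᵀ) ≤ 3 * ε * k * frobSq A := by
    calc (k : ℝ) * specNorm (A * Aᵀ - C * Cᵀ) ≤ (k : ℝ) * (3 * ε * frobSq A) :=
          mul_le_mul_of_nonneg_left h (Nat.cast_nonneg k)
      _ = 3 * ε * k * frobSq A := by ring
  rw [abs_sub_le_iff, hCsum, hAsum]
  constructor
  · linarith
  · linarith
end
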